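/- The ν-graph G(ν) has exactly |I ∪ J| − 1 edges. -/

import Mathlib

namespace FP

/-- The three possible types of an edge `(i,j)` with `i < j`. -/
inductive EdgeType : Type
  | forward
  | backward
  | bidirectional
  deriving DecidableEq

/-- An edge is a pair of endpoints `(i,j)` (with the convention `i < j`
for well-formed graphs) together with its type. -/
abbrev GEdge : Type := ℕ × ℕ × EdgeType

/-- A directed multigraph given by a list of edges, together with a
distinguished source and sink vertex. -/
structure LGraph : Type where
  edges : List GEdge
  src : ℕ
  snk : ℕ

namespace LGraph

/-- The number of edges. -/
def m (G : LGraph) : ℕ := G.edges.length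

/-- The smaller endpoint of the `e`-th edge. -/
def tail (G : LGraph) (e : Fin G.m) : ℕ := (G.edges.get e).1

/-- The larger endpoint of the `e`-th edge. -/
def head (G : LGraph) (e : Fin G.m) : ℕ := (G.edges.get e).2.1

/-- The type of the `e`-th edge. -/
def etype (G : LGraph) (e : Fin G.m) : EdgeType := (G.edges.get e).2.2

/-- Wellformedness: the graph has vertex set `{1,…,n}` and each edge `(i,j)`
satisfies `i < j`. -/
def WF (G : LGraph) (n : ℕ) : Prop := ∀ e ∈ G.edges, 1 ≤ e.1 ∧ e.1 < e.2.1 ∧ e.2.1 ≤ n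

/-- The netflow of `x` at the vertex `v`: total flow on edges `(v,k)`, `v < k`,
minus the total flow on edges `(i,v)`, `i < v`. -/
noncomputable def netflow (G : LGraph) (x : Fin G.m → ℝ) (v : ℕ) : ℝ :=
  ∑ e : Fin G.m, ((if G.tail e = v then x e else 0) - (if G.head e = v then x e else 0))

/-- The set of `u`-flows on `G`, where `u = e_src - e_snk`: the netflow is `1` at the
source, `-1` at the sink and `0` elsewhere, flows on forward edges are nonnegative and
flows on backward edges are nonpositive (bidirectional edges unrestricted).  This is
the flow polytope `F_G ⊆ ℝ^m`. -/
def flowSet (G : LGraph) : Set (Fin G.m → ℝ) :=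
  { x | (∀ v : ℕ, G.netflow x v = (if v = G.src then (1 : ℝ) else 0) - (if v = G.snk then 1 else 0))
      ∧ ∀ e : Fin G.m, (G.etype e = .forward → 0 ≤ x e) ∧ (G.etype e = .backward → x e ≤ 0) }

/-- One step of a directed walk: forward edges can be traversed from the smaller to the
larger endpoint, backward edges from the larger to the smaller, bidirectional edges both
ways. -/
def DStep (G : LGraph) (a b : ℕ) : Prop :=
  ∃ e : Fin G.m, (G.tail e = a ∧ G.head e = b ∧ G.etype e ≠ .backward) ∨
                 (G.head e = a ∧ G.tail e = b ∧ G.etype e ≠ .forward)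

/-- `G` is acyclic if it has no directed cycle. -/
def Acyclic (G : LGraph) : Prop := ∀ v : ℕ, ¬ Relation.TransGen G.DStep v v

/-- One step in the underlying undirected graph. -/
def UStep (G : LGraph) (a b : ℕ) : Prop :=
  ∃ e : Fin G.m, (G.tail e = a ∧ G.head e = b) ∨ (G.head e = a ∧ G.tail e = b)

/-- `G` is connected (as an undirected graph on the vertex set `{1,…,n}`). -/
def Connected (G : LGraph) (n : ℕ) : Prop :=
  ∀ a b : ℕ, 1 ≤ a → a ≤ n → 1 ≤ b → b ≤ n → Relation.ReflTransGen G.UStep a b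

/-- The starting vertex of a traversal step `(e, d)`: `d = true` means the edge `e` is
traversed from its smaller to its larger endpoint. -/
def sv (G : LGraph) (s : Fin G.m × Bool) : ℕ := if s.2 then G.tail s.1 else G.head s.1

/-- The ending vertex of a traversal step. -/
def ev (G : LGraph) (s : Fin G.m × Bool) : ℕ := if s.2 then G.head s.1 else G.tail s.1

/-- A route of `G`: a directed path from the source to the sink (not repeating edges),
traversing each edge in a direction allowed by its type. -/
structure Route (G : LGraph) : Type where
  steps : List (Fin G.m × Bool)
  ne : steps ≠ []
  chain : steps.Chain' (fun s t => G.ev s = G.sv t)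
  first : G.sv (steps.head ne) = G.src
  last : G.ev (steps.getLast ne) = G.snk
  dir : ∀ s ∈ steps, (s.2 = true → G.etype s.1 ≠ .backward) ∧ (s.2 = false → G.etype s.1 ≠ .forward)
  nodup : (steps.map Prod.fst).Nodup

/-- The signed characteristic vector of a route: `+1` on edges traversed from smaller to
larger endpoint, `-1` on edges traversed from larger to smaller endpoint, `0` on unused
edges. -/
noncomputable def Route.vec {G : LGraph} (R : Route G) : Fin G.m → ℝ := fun e =>
  if (e, true) ∈ R.steps then 1 else if (e, false) ∈ R.steps then -1 else 0

end LGraph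

/-- A point of `ℝ^α` is a lattice point if all its coordinates are integers. -/
def IsLatticePt {α : Type*} (x : α → ℝ) : Prop := ∀ i, ∃ z : ℤ, x i = (z : ℝ)

/-- Integral equivalence of two subsets `P ⊆ ℝ^α`, `Q ⊆ ℝ^β`: an affine map `φ` restricting
to a bijection from `P` onto `Q` and to a bijection between the lattice points of the
affine hull of `P` and those of the affine hull of `Q`. -/
def IntEquiv {α β : Type*} (P : Set (α → ℝ)) (Q : Set (β → ℝ)) : Prop :=
  ∃ φ : (α → ℝ) →ᵃ[ℝ] (β → ℝ),
    Set.BijOn φ P Q ∧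
    Set.BijOn φ ({x | IsLatticePt x} ∩ (affineSpan ℝ P : Set (α → ℝ)))
                ({x | IsLatticePt x} ∩ (affineSpan ℝ Q : Set (β → ℝ)))

/-! ### Lattice paths and the canonical indexing -/

/-- A lattice path is a list of letters, `true` = E-step `(1,0)`, `false` = N-step `(0,1)`.
`ovl ν` is the path `ν̄ = E ν N`. -/
def ovl (ν : List Bool) : List Bool := true :: ν ++ [false]

/-- Auxiliary function for the canonical indexing: `prev` is the previous letter,
`k` is the last index used. -/
def canonIdxAux : List Bool → Bool → ℕ → List ℕ
  | [], _, _ => []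
  | c :: rest, prev, k =>
    if prev && !c then k :: canonIdxAux rest c k
    else (k + 1) :: canonIdxAux rest c (k + 1)

/-- The canonical indexing of a word in `{E,N}`: reading left to right, each letter
receives the next positive integer, except that the first `N` of a maximal run of `N`s
receives the index of the immediately preceding `E` step. -/
def canonIdx (w : List Bool) : List ℕ := canonIdxAux w false 0

/-- The letter at position `p` (`true` = E). -/
def letterAt (w : List Bool) (p : ℕ) : Bool := w.getD p false

/-- The canonical index of the letter at position `p`. -/
def idxAt (w : List Bool) (p : ℕ) : ℕ := (canonIdx w).getD p 0

/-- The largest canonical index `n` of the word `w`. -/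
def nIdx (w : List Bool) : ℕ := idxAt w (w.length - 1)

/-- The set `I` of indices of E steps. -/
def Iset (w : List Bool) : Finset ℕ :=
  (((List.range w.length).filter (fun p => letterAt w p)).map (idxAt w)).toFinset

/-- The set `J` of indices of N steps. -/
def Jset (w : List Bool) : Finset ℕ :=
  (((List.range w.length).filter (fun p => !letterAt w p)).map (idxAt w)).toFinset

/-- The set `I ∩ J` of indices of valleys. -/
def Vset (w : List Bool) : Finset ℕ := Iset w ∩ Jset w

/-- The valleys `v_1 < v_2 < ⋯ < v_w` as a sorted list. -/
def valleyList (w : List Bool) : List ℕ := (Vset w).sort (· ≤ ·)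

/-- The number `w` of valleys. -/
def numVal (w : List Bool) : ℕ := (valleyList w).length

/-- The `k`-th valley `v_k` (`1 ≤ k ≤ numVal w`). -/
def vv (w : List Bool) (k : ℕ) : ℕ := (valleyList w).getD (k - 1) 0

/-! ### The ν-graph, its bidirectional version and partial augmentations -/

/-- `(i,j)` is an edge of the ν-graph iff `E_i ⋯ N_j` is a consecutive subword of `w`
whose only valleys are `E_k N_k` with `k = i` or `k = j`. -/
def isNuEdgeB (w : List Bool) (i j : ℕ) : Bool :=
  (List.range w.length).any fun p =>
    (List.range w.length).any fun q =>
      decide (p < q) && letterAt w p && !letterAt w q &&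
      decide (idxAt w p = i) && decide (idxAt w q = j) &&
      ((List.range w.length).all fun r =>
        !(decide (p ≤ r) && decide (r + 1 ≤ q) && letterAt w r && !letterAt w (r + 1)) ||
        decide (idxAt w r = i) || decide (idxAt w r = j))

/-- The list of edges `(i,j)`, `i < j`, of the ν-graph `G(ν)` (where `w = ν̄`). -/
def nuEdgePairs (w : List Bool) : List (ℕ × ℕ) :=
  ((List.range (nIdx w + 1)).flatMap fun i =>
    (List.range (nIdx w + 1)).map fun j => (i, j)).filter
    fun p => decide (p.1 < p.2) && isNuEdgeB w p.1 p.2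

/-- The edges of `G(ν)`, all forward. -/
def Gedges (w : List Bool) : List GEdge :=
  (nuEdgePairs w).map fun p => (p.1, p.2, EdgeType.forward)

/-- The edges of the bidirectional ν-graph `G_B(ν)`: an edge is bidirectional exactly
when both of its endpoints lie in `I ∩ J`. -/
def GBedges (w : List Bool) : List GEdge :=
  (nuEdgePairs w).map fun p =>
    (p.1, p.2, if p.1 ∈ Vset w ∧ p.2 ∈ Vset w then EdgeType.bidirectional else EdgeType.forward)

/-- Out-degree of a vertex in an edge list: the number of edges traversable out of `v`. -/
def outDegL (E : List GEdge) (v : ℕ) : ℕ :=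
  (E.filter fun e => (decide (e.1 = v) && decide (e.2.2 ≠ EdgeType.backward)) ||
                     (decide (e.2.1 = v) && decide (e.2.2 ≠ EdgeType.forward))).length

/-- In-degree of a vertex in an edge list: the number of edges traversable into `v`. -/
def inDegL (E : List GEdge) (v : ℕ) : ℕ :=
  (E.filter fun e => (decide (e.2.1 = v) && decide (e.2.2 ≠ EdgeType.backward)) ||
                     (decide (e.1 = v) && decide (e.2.2 ≠ EdgeType.forward))).length

/-- The full augmentation of an edge list on inner vertices `1,…,n`: add a source `s = 0`
and a sink `t = n+1` together with forward edges `(s,i)` and `(i,t)` for all `i`. -/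
def fullAug (n : ℕ) (E : List GEdge) : List GEdge :=
  E ++ ((List.range n).map fun i => (0, i + 1, EdgeType.forward))
    ++ ((List.range n).map fun i => (i + 1, n + 1, EdgeType.forward))

/-- The partial augmentation: the full augmentation with the edges `(s,i)` for which `i`
has out-degree one, and the edges `(j,t)` for which `j` has in-degree one, removed. -/
def partAug (n : ℕ) (E : List GEdge) : List GEdge :=
  E ++ ((List.range n).filterMap fun i =>
          if outDegL (fullAug n E) (i + 1) = 1 then none else some (0, i + 1, EdgeType.forward))
    ++ ((List.range n).filterMap fun j =>
          if inDegL (fullAug n E) (j + 1) = 1 then none else some (j + 1, n + 1, EdgeType.forward))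

/-- The graph `G̃_B(ν)`: the partial augmentation of the bidirectional ν-graph, with
source `s = 0` and sink `t = n+1`. -/
def GBt (w : List Bool) : LGraph := ⟨partAug (nIdx w) (GBedges w), 0, nIdx w + 1⟩

/-- The graph `G̃(ν)`: the partial augmentation of the ν-graph. -/
def Gt (w : List Bool) : LGraph := ⟨partAug (nIdx w) (Gedges w), 0, nIdx w + 1⟩

/-- The edges of the graph `G(ν,k)`: the bidirectional path of `G_B(ν)` is replaced by
`C_ν(k)`, i.e. all edges are made forward, the forward edge `(v_k, v_{k+1})` is removed
and the backward edge `(v_1, v_w)` is added when `k < w` (for `k = w` nothing changes). -/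
def GnuIedges (w : List Bool) (k : ℕ) : List GEdge :=
  ((nuEdgePairs w).filterMap fun p =>
    if k < numVal w ∧ p = (vv w k, vv w (k + 1)) then none
    else some (p.1, p.2, EdgeType.forward))
  ++ (if k < numVal w then [(vv w 1, vv w (numVal w), EdgeType.backward)] else [])

/-- The graph `G̃(ν,k)`: the partial augmentation of `G(ν,k)`. -/
def Gnut (w : List Bool) (k : ℕ) : LGraph := ⟨partAug (nIdx w) (GnuIedges w k), 0, nIdx w + 1⟩

/-- All candidate edges on the vertex set `{0,1,…,n+1}`. -/
def allCand (n : ℕ) : List GEdge :=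
  (List.range (n + 2)).flatMap fun a =>
    (List.range (n + 2)).flatMap fun b =>
      [(a, b, EdgeType.forward), (a, b, EdgeType.backward), (a, b, EdgeType.bidirectional)]

/-- The intersection `∩_{k ∈ S} G̃(ν,k)` of the partial augmentations of the graphs
`G(ν,k)`, `k ∈ S`, as a graph with source `0` and sink `n+1`. -/
def interGraph (w : List Bool) (S : Finset ℕ) : LGraph :=
  ⟨(allCand (nIdx w)).filter fun e =>
      decide (∀ k ∈ S, e ∈ partAug (nIdx w) (GnuIedges w k)), 0, nIdx w + 1⟩

/-! ### The polytopes `Q_i` -/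

/-- The condition on a route of `G̃_B(ν)` defining `Q_k` (`1 ≤ k < w`): the route does not
traverse the bidirectional edge `(v_k, v_{k+1})` forward, and traverses it backward
whenever it traverses any bidirectional edge backward. -/
def QRoute (w : List Bool) (k : ℕ) (R : LGraph.Route (GBt w)) : Prop :=
  (∀ e : Fin (GBt w).m, (GBt w).tail e = vv w k → (GBt w).head e = vv w (k + 1) →
      (e, true) ∉ R.steps) ∧
  ((∃ s ∈ R.steps, s.2 = false) →
      ∃ e : Fin (GBt w).m, (GBt w).tail e = vv w k ∧ (GBt w).head e = vv w (k + 1) ∧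
        (e, false) ∈ R.steps)

/-- The polytope `Q_k` for `1 ≤ k ≤ w`.  For `k < w` it is the convex hull of the signed
characteristic vectors of the routes satisfying `QRoute`, and `Q_w` is the flow polytope
`F_{G̃(ν)}` viewed inside `F_{G̃_B(ν)}` (the nonnegative flows). -/
def Qset (w : List Bool) (k : ℕ) : Set (Fin (GBt w).m → ℝ) :=
  if k = numVal w then { x ∈ (GBt w).flowSet | ∀ e, 0 ≤ x e }
  else convexHull ℝ { x | ∃ R : LGraph.Route (GBt w), QRoute w k R ∧ x = R.vec }

/-! ### Products of simplices -/

/-- The `i`-th standard basis vector. -/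
def stdBasisVec {α : Type*} [DecidableEq α] (i : α) : α → ℝ := fun k => if k = i then 1 else 0

/-- The product of simplices `Δ_a × Δ_b = conv{(e_i, e_j)} ⊆ ℝ^{a+1} × ℝ^{b+1}`. -/
def prodSimplices (a b : ℕ) : Set ((Fin (a + 1) ⊕ Fin (b + 1)) → ℝ) :=
  convexHull ℝ { x | ∃ (i : Fin (a + 1)) (j : Fin (b + 1)),
    x = Sum.elim (stdBasisVec i) (stdBasisVec j) }

/-! ### Arcs and (I,J)-trees -/

/-- An arc on `w`: a pair `(i,j)` with `i ∈ I` and `j ∈ J`. -/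
def IsArc (w : List Bool) (p : ℕ × ℕ) : Prop := p.1 ∈ Iset w ∧ p.2 ∈ Jset w

/-- The six configurations in which the arcs `(i,j) = p` and `(i',j') = q` cyclically
cross. -/
def CycCrossRaw (p q : ℕ × ℕ) : Prop :=
  (p.1 < q.1 ∧ q.1 < p.2 ∧ p.2 < q.2) ∨   -- i < i' < j < j'
  (q.2 < p.1 ∧ p.1 < q.1 ∧ q.1 < p.2) ∨   -- j' < i < i' < j
  (p.2 < q.2 ∧ q.2 < p.1 ∧ p.1 < q.1) ∨   -- j < j' < i < i'
  (q.1 < p.2 ∧ p.2 < q.2 ∧ q.2 < p.1) ∨   -- i' < j < j' < i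
  (p.1 < q.2 ∧ q.2 < q.1 ∧ q.1 < p.2) ∨   -- i < j' < i' < j
  (p.2 < p.1 ∧ p.1 < q.2 ∧ q.2 < q.1)     -- j < i < j' < i'

/-- Two arcs cyclically cross (up to swapping the roles of the two arcs). -/
def CycCross (p q : ℕ × ℕ) : Prop := CycCrossRaw p q ∨ CycCrossRaw q p

/-- A cyclic (I,J)-forest: a set of pairwise cyclically non-crossing arcs. -/
def CycForest (w : List Bool) (F : Set (ℕ × ℕ)) : Prop :=
  (∀ p ∈ F, IsArc w p) ∧ ∀ p ∈ F, ∀ q ∈ F, p ≠ q → ¬ CycCross p q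

/-- A cyclic (I,J)-tree: a maximal cyclic (I,J)-forest. -/
def CycTree (w : List Bool) (T : Set (ℕ × ℕ)) : Prop :=
  CycForest w T ∧ ∀ T', CycForest w T' → T ⊆ T' → T' = T

/-- An increasing (I,J)-forest: a cyclic (I,J)-forest all of whose arcs are increasing
or minimal. -/
def IncForest (w : List Bool) (F : Set (ℕ × ℕ)) : Prop :=
  CycForest w F ∧ ∀ p ∈ F, p.1 ≤ p.2

/-- An increasing (I,J)-tree: a maximal increasing (I,J)-forest. -/
def IncTree (w : List Bool) (T : Set (ℕ × ℕ)) : Prop :=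
  IncForest w T ∧ ∀ T', IncForest w T' → T ⊆ T' → T' = T

/-- Two edges `(a,b)` and `(c,d)` with `a < b`, `c < d` cross if `a < c < b < d` or
`c < a < d < b`. -/
def CrossE (p q : ℕ × ℕ) : Prop :=
  (p.1 < q.1 ∧ q.1 < p.2 ∧ p.2 < q.2) ∨ (q.1 < p.1 ∧ p.1 < q.2 ∧ q.2 < p.2)

/-- A graph on `I ∪ J` whose edges `(i,j)` satisfy `i ∈ I`, `j ∈ J`, `i < j`, which is
alternating (every vertex is a source or a sink) and non-crossing. -/
def AltNC (w : List Bool) (H : Set (ℕ × ℕ)) : Prop :=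
  (∀ p ∈ H, p.1 ∈ Iset w ∧ p.2 ∈ Jset w ∧ p.1 < p.2) ∧
  (∀ v : ℕ, (∀ p ∈ H, p.2 ≠ v) ∨ (∀ p ∈ H, p.1 ≠ v)) ∧
  (∀ p ∈ H, ∀ q ∈ H, p ≠ q → ¬ CrossE p q)

/-- The set `D_ν̄`: maximal alternating non-crossing graphs. -/
def Dnu (w : List Bool) (H : Set (ℕ × ℕ)) : Prop :=
  AltNC w H ∧ ∀ H', AltNC w H' → H ⊆ H' → H' = H

/-- A maximal arc: `(1,n)`, or an arc `(i,j)` with `j < i` and no index strictly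
between `j` and `i`. -/
def MaxArc (w : List Bool) (p : ℕ × ℕ) : Prop :=
  (p.1 = 1 ∧ p.2 = nIdx w) ∨
  (p.2 < p.1 ∧ ∀ k ∈ Iset w ∪ Jset w, ¬ (p.2 < k ∧ k < p.1))

/-! ### Cyclic peaks and rotations -/

/-- The positions `r` of the (non-wrap-around) cyclic peaks: `N` at `r` and `E` at `r+1`. -/
def peakPositions (w : List Bool) : List ℕ :=
  (List.range w.length).filter fun r => !letterAt w r && letterAt w (r + 1)

/-- The position of the `E` step of the `l`-th cyclic peak (`1 ≤ l ≤ w`); the `w`-th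
cyclic peak is the wrap-around peak, whose `E` step is at position `0`. -/
def shiftPos (w : List Bool) (l : ℕ) : ℕ :=
  if l = numVal w then 0 else (peakPositions w).getD (l - 1) 0 + 1

/-- The word `ν̄(l)` obtained by cyclically shifting `w = ν̄` to start at the `E` step of
the `l`-th cyclic peak. -/
def rotWord (w : List Bool) (l : ℕ) : List Bool :=
  w.drop (shiftPos w l) ++ w.take (shiftPos w l)

/-- The effect of the rotation on positions. -/
def rotPos (w : List Bool) (l : ℕ) (p : ℕ) : ℕ :=
  (p + w.length - shiftPos w l) % w.length

/-- The position of the `E` step with index `i`. -/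
def Epos (w : List Bool) (i : ℕ) : ℕ :=
  (((List.range w.length).filter fun p => letterAt w p && decide (idxAt w p = i))).headD 0

/-- The position of the `N` step with index `j`. -/
def Npos (w : List Bool) (j : ℕ) : ℕ :=
  (((List.range w.length).filter fun p => !letterAt w p && decide (idxAt w p = j))).headD 0

/-- The map induced on arcs by the cyclic rotation taking `ν̄` to `ν̄(l)`. -/
def arcMap (w : List Bool) (l : ℕ) (p : ℕ × ℕ) : ℕ × ℕ :=
  (idxAt (rotWord w l) (rotPos w l (Epos w p.1)),
   idxAt (rotWord w l) (rotPos w l (Npos w p.2)))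

/-- The arc determined by the `l`-th cyclic peak. -/
def peakArc (w : List Bool) (l : ℕ) : ℕ × ℕ :=
  if l = numVal w then (1, nIdx w)
  else (idxAt w ((peakPositions w).getD (l - 1) 0 + 1), idxAt w ((peakPositions w).getD (l - 1) 0))

namespace Aux14


lemma canonIdxAux_length (l : List Bool) (prev : Bool) (k : ℕ) :
    (canonIdxAux l prev k).length = l.length := by
  induction l generalizing prev k with
  | nil => rfl
  | cons c rest ih => unfold canonIdxAux; split <;> simp [ih]

lemma canonIdxAux_cons (c : Bool) (rest : List Bool) (prev : Bool) (k : ℕ) :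
    canonIdxAux (c :: rest) prev k =
      (if prev && !c then k else k + 1) ::
        canonIdxAux rest c (if prev && !c then k else k + 1) := by
  by_cases h : (prev && !c) = true <;> simp [canonIdxAux, h]

lemma canonIdxAux_step : ∀ (p : ℕ) (l : List Bool) (prev : Bool) (k : ℕ), p + 1 < l.length →
    (canonIdxAux l prev k).getD (p+1) 0 =
      if l.getD p false && !(l.getD (p+1) false) then (canonIdxAux l prev k).getD p 0
      else (canonIdxAux l prev k).getD p 0 + 1 := by
  intro p
  induction p with
  | zero =>
    intro l prev k hl
    match l with
    | c :: c' :: rest =>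
      rw [canonIdxAux_cons, canonIdxAux_cons]
      simp
  | succ p ih =>
    intro l prev k hl
    match l with
    | c :: rest =>
      rw [canonIdxAux_cons]
      simp only [List.getD_cons_succ, List.length_cons] at *
      exact ih rest c _ (by omega)



lemma idxAt_zero (w : List Bool) (hw : w ≠ []) : idxAt w 0 = 1 := by
  match w with
  | c :: rest =>
    unfold idxAt canonIdx
    rw [canonIdxAux_cons]
    simp

lemma idxAt_step (w : List Bool) (p : ℕ) (h : p + 1 < w.length) :
    idxAt w (p+1) =
      if letterAt w p && !(letterAt w (p+1)) then idxAt w p else idxAt w p + 1 := by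
  unfold idxAt canonIdx letterAt
  exact canonIdxAux_step p w false 0 h

lemma idxAt_le_succ (w : List Bool) (p : ℕ) (h : p + 1 < w.length) :
    idxAt w p ≤ idxAt w (p+1) := by
  rw [idxAt_step w p h]; split <;> omega

lemma idxAt_mono (w : List Bool) {p q : ℕ} (hpq : p ≤ q) (hq : q < w.length) :
    idxAt w p ≤ idxAt w q := by
  induction q with
  | zero => interval_cases p; exact le_refl _
  | succ q ih =>
    rcases Nat.eq_or_lt_of_le hpq with h | h
    · subst h; exact le_refl _
    · exact le_trans (ih (by omega) (by omega)) (idxAt_le_succ w q hq)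

lemma idxAt_lt (w : List Bool) {p q : ℕ} (h2 : p + 2 ≤ q) (hq : q < w.length) :
    idxAt w p < idxAt w q := by
  have h1 : p + 1 < w.length := by omega
  have h2' : p + 2 < w.length := by omega
  have key : idxAt w p < idxAt w (p+2) := by
    rw [idxAt_step w (p+1) h2']
    by_cases hc : (letterAt w p && !(letterAt w (p+1))) = true
    · have : letterAt w (p+1) = false := by
        rcases Bool.and_eq_true _ _ |>.mp hc with ⟨_, h⟩
        exact by simpa using h
      simp [this]
      have := idxAt_le_succ w p h1
      omega
    · rw [idxAt_step w p h1, if_neg hc]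
      split <;> omega
  exact lt_of_lt_of_le key (idxAt_mono w h2 hq)

lemma idxAt_eq_of (w : List Bool) {p q : ℕ} (hpq : p < q) (hq : q < w.length)
    (heq : idxAt w p = idxAt w q) :
    q = p + 1 ∧ letterAt w p = true ∧ letterAt w (p+1) = false := by
  have hq1 : q = p + 1 := by
    by_contra h
    have := idxAt_lt w (show p + 2 ≤ q by omega) hq
    omega
  subst hq1
  rw [idxAt_step w p hq] at heq
  by_cases hc : (letterAt w p && !(letterAt w (p+1))) = true
  · rcases Bool.and_eq_true _ _ |>.mp hc with ⟨h1, h2⟩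
    exact ⟨rfl, h1, by simpa using h2⟩
  · rw [if_neg hc] at heq; omega

lemma idxAt_surj (w : List Bool) :
    ∀ q, q < w.length → ∀ m, 1 ≤ m → m ≤ idxAt w q → ∃ p, p ≤ q ∧ idxAt w p = m := by
  intro q
  induction q with
  | zero =>
    intro hq m h1 h2
    have h0 : idxAt w 0 = 1 := idxAt_zero w (by intro h; simp [h] at hq)
    exact ⟨0, le_refl _, by omega⟩
  | succ q ih =>
    intro hq m h1 h2
    by_cases hle : m ≤ idxAt w q
    · obtain ⟨p, hp, hp2⟩ := ih (by omega) m h1 hle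
      exact ⟨p, by omega, hp2⟩
    · refine ⟨q + 1, le_refl _, ?_⟩
      rw [idxAt_step w q hq] at h2 ⊢
      by_cases hc : (letterAt w q && !(letterAt w (q+1))) = true <;>
        simp [hc] at h2 ⊢ <;> omega

lemma mem_Iset (w : List Bool) (i : ℕ) :
    i ∈ Iset w ↔ ∃ p, p < w.length ∧ letterAt w p = true ∧ idxAt w p = i := by
  simp only [Iset, List.mem_toFinset, List.mem_map, List.mem_filter, List.mem_range]
  constructor
  · rintro ⟨p, ⟨hp, hl⟩, hi⟩; exact ⟨p, hp, hl, hi⟩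
  · rintro ⟨p, hp, hl, hi⟩; exact ⟨p, ⟨hp, hl⟩, hi⟩

lemma mem_Jset (w : List Bool) (j : ℕ) :
    j ∈ Jset w ↔ ∃ q, q < w.length ∧ letterAt w q = false ∧ idxAt w q = j := by
  simp only [Jset, List.mem_toFinset, List.mem_map, List.mem_filter, List.mem_range,
    Bool.not_eq_true']
  constructor
  · rintro ⟨p, ⟨hp, hl⟩, hi⟩; exact ⟨p, hp, hl, hi⟩
  · rintro ⟨p, hp, hl, hi⟩; exact ⟨p, ⟨hp, hl⟩, hi⟩

lemma mem_Vset (w : List Bool) (v : ℕ) :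
    v ∈ Vset w ↔ ∃ r, r + 1 < w.length ∧ letterAt w r = true ∧ letterAt w (r+1) = false ∧
      idxAt w r = v := by
  constructor
  · intro hv
    rw [Vset, Finset.mem_inter, mem_Iset, mem_Jset] at hv
    obtain ⟨⟨p, hp, hpl, hpi⟩, ⟨q, hq, hql, hqi⟩⟩ := hv
    have hne : p ≠ q := by intro h; rw [h, hql] at hpl; exact absurd hpl (by simp)
    rcases Nat.lt_or_ge p q with h | h
    · obtain ⟨h1, h2, h3⟩ := idxAt_eq_of w h hq (hpi.trans hqi.symm)
      exact ⟨p, by omega, h2, h3, hpi⟩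
    · have h' : q < p := by omega
      obtain ⟨h1, h2, h3⟩ := idxAt_eq_of w h' hp (hqi.trans hpi.symm)
      rw [hql] at h2; exact absurd h2 (by simp)
  · rintro ⟨r, hr, h1, h2, h3⟩
    have hidx : idxAt w (r+1) = v := by
      rw [idxAt_step w r hr, h1, h2]; simpa using h3
    rw [Vset, Finset.mem_inter, mem_Iset, mem_Jset]
    exact ⟨⟨r, by omega, h1, h3⟩, ⟨r+1, hr, h2, hidx⟩⟩

/-- A switch below a given N position. -/
lemma exists_switch_le (w : List Bool) (h0 : letterAt w 0 = true) :
    ∀ q, letterAt w q = false → ∃ r, r + 1 ≤ q ∧ letterAt w r = true ∧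
      letterAt w (r+1) = false := by
  intro q
  induction q with
  | zero => intro h; rw [h0] at h; exact absurd h (by simp)
  | succ q ih =>
    intro h
    by_cases hq : letterAt w q = true
    · exact ⟨q, le_refl _, hq, h⟩
    · obtain ⟨r, hr, h1, h2⟩ := ih (by simpa using hq)
      exact ⟨r, by omega, h1, h2⟩

/-- A switch between an E position and a later N position. -/
lemma exists_switch_between (w : List Bool) :
    ∀ q p, p < q → letterAt w p = true → letterAt w q = false →
      ∃ r, p ≤ r ∧ r + 1 ≤ q ∧ letterAt w r = true ∧ letterAt w (r+1) = false := by
  intro q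
  induction q with
  | zero => intro p hp; omega
  | succ q ih =>
    intro p hp hpl hql
    by_cases hpq : p = q
    · exact ⟨p, le_refl _, by omega, hpl, by rwa [hpq]⟩
    · by_cases hq : letterAt w q = true
      · exact ⟨q, by omega, le_refl _, hq, hql⟩
      · obtain ⟨r, h1, h2, h3, h4⟩ := ih p (by omega) hpl (by simpa using hq)
        exact ⟨r, h1, by omega, h3, h4⟩

/-- A switch above a given E position (using that the word ends with N). -/
lemma exists_switch_ge (w : List Bool) (hlast : letterAt w (w.length - 1) = false) :
    ∀ d p, w.length - 1 - p = d → p < w.length → letterAt w p = true →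
      ∃ r, p ≤ r ∧ r + 1 < w.length ∧ letterAt w r = true ∧ letterAt w (r+1) = false := by
  intro d
  induction d with
  | zero =>
    intro p hd hp hl
    have : p = w.length - 1 := by omega
    rw [this, hlast] at hl; exact absurd hl (by simp)
  | succ d ih =>
    intro p hd hp hl
    by_cases h : letterAt w (p+1) = false
    · exact ⟨p, le_refl _, by omega, hl, h⟩
    · obtain ⟨r, h1, h2, h3, h4⟩ := ih (p+1) (by omega) (by omega) (by simpa using h)
      exact ⟨r, by omega, h2, h3, h4⟩

lemma isNuEdgeB_iff (w : List Bool) (i j : ℕ) (hij : i < j) :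
    isNuEdgeB w i j = true ↔
      i ∈ Iset w ∧ j ∈ Jset w ∧ ∀ v ∈ Vset w, ¬(i < v ∧ v < j) := by
  simp only [isNuEdgeB, List.any_eq_true, List.mem_range, Bool.and_eq_true,
    decide_eq_true_eq, List.all_eq_true, Bool.or_eq_true, Bool.not_eq_true,
    Bool.not_eq_true']
  constructor
  · rintro ⟨p, hp, q, hq, ⟨⟨⟨⟨hpq, hpl⟩, hql⟩, hpi⟩, hqi⟩, hall⟩
    refine ⟨(mem_Iset w i).mpr ⟨p, hp, hpl, hpi⟩, (mem_Jset w j).mpr ⟨q, hq, hql, hqi⟩, ?_⟩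
    rintro v hv ⟨hiv, hvj⟩
    obtain ⟨r, hr, hrl, hrl', hri⟩ := (mem_Vset w v).mp hv
    have hri' : idxAt w (r+1) = v := by
      rw [idxAt_step w r hr, hrl, hrl']; simpa using hri
    have hpr : p ≤ r := by
      by_contra h
      have : idxAt w (r+1) ≤ idxAt w p := idxAt_mono w (by omega) hp
      omega
    have hrq : r + 1 ≤ q := by
      by_contra h
      have : idxAt w q ≤ idxAt w r := idxAt_mono w (by omega) (by omega)
      omega
    rcases hall r (by omega) with (h | h) | h
    · rw [show (decide (p ≤ r) && decide (r + 1 ≤ q) && letterAt w r &&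
          !letterAt w (r + 1)) = true by simp [hpr, hrq, hrl, hrl']] at h
      exact absurd h (by simp)
    · omega
    · omega
  · rintro ⟨hi, hj, hnov⟩
    obtain ⟨p, hp, hpl, hpi⟩ := (mem_Iset w i).mp hi
    obtain ⟨q, hq, hql, hqi⟩ := (mem_Jset w j).mp hj
    have hpq : p < q := by
      by_contra h
      have : idxAt w q ≤ idxAt w p := idxAt_mono w (by omega) hp
      omega
    refine ⟨p, hp, q, hq, ⟨⟨⟨⟨hpq, hpl⟩, hql⟩, hpi⟩, hqi⟩, ?_⟩
    intro r hr
    by_cases hpr : p ≤ r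
    · by_cases hrq : r + 1 ≤ q
      · by_cases hrl : letterAt w r = true
        · by_cases hrl' : letterAt w (r+1) = false
          · -- r is a valley between p and q
            have hv : idxAt w r ∈ Vset w :=
              (mem_Vset w _).mpr ⟨r, by omega, hrl, hrl', rfl⟩
            have h1 : i ≤ idxAt w r := hpi ▸ idxAt_mono w hpr hr
            have h2 : idxAt w (r+1) ≤ j := hqi ▸ idxAt_mono w hrq hq
            have h3 : idxAt w (r+1) = idxAt w r := by
              rw [idxAt_step w r (by omega), hrl, hrl']; simp
            have := hnov _ hv
            rcases Nat.lt_or_ge i (idxAt w r) with h | h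
            · right; omega
            · left; right; omega
          · refine Or.inl (Or.inl (Bool.eq_false_iff.mpr fun h => ?_))
            simp only [Bool.and_eq_true, decide_eq_true_eq, Bool.not_eq_true'] at h
            exact hrl' h.2
        · refine Or.inl (Or.inl (Bool.eq_false_iff.mpr fun h => ?_))
          simp only [Bool.and_eq_true, decide_eq_true_eq, Bool.not_eq_true'] at h
          exact hrl h.1.2
      · refine Or.inl (Or.inl (Bool.eq_false_iff.mpr fun h => ?_))
        simp only [Bool.and_eq_true, decide_eq_true_eq, Bool.not_eq_true'] at h
        omega
    · refine Or.inl (Or.inl (Bool.eq_false_iff.mpr fun h => ?_))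
      simp only [Bool.and_eq_true, decide_eq_true_eq, Bool.not_eq_true'] at h
      omega

lemma snd_valley (w : List Bool) {i j : ℕ} (hij : i < j)
    (hi : i ∈ Iset w) (hj : j ∈ Jset w) (hnov : ∀ v ∈ Vset w, ¬(i < v ∧ v < j))
    (hiV : i ∉ Vset w) : j ∈ Vset w := by
  obtain ⟨p, hp, hpl, hpi⟩ := (mem_Iset w i).mp hi
  obtain ⟨q, hq, hql, hqi⟩ := (mem_Jset w j).mp hj
  have hpq : p < q := by
    by_contra h
    have : idxAt w q ≤ idxAt w p := idxAt_mono w (by omega) hp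
    omega
  obtain ⟨r, h1, h2, h3, h4⟩ := exists_switch_between w q p hpq hpl hql
  have hv : idxAt w r ∈ Vset w := (mem_Vset w _).mpr ⟨r, by omega, h3, h4, rfl⟩
  have hle1 : i ≤ idxAt w r := hpi ▸ idxAt_mono w h1 (by omega)
  have h5 : idxAt w (r+1) = idxAt w r := by
    rw [idxAt_step w r (by omega), h3, h4]; simp
  have hle2 : idxAt w r ≤ j := by
    rw [← h5, ← hqi]; exact idxAt_mono w h2 hq
  have := hnov _ hv
  have : idxAt w r = i ∨ idxAt w r = j := by omega
  rcases this with h | h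
  · exact absurd (h ▸ hv) hiV
  · exact h ▸ hv

lemma idxAt_le_nIdx (w : List Bool) {p : ℕ} (hp : p < w.length) : idxAt w p ≤ nIdx w :=
  idxAt_mono w (by omega) (by omega)

lemma one_le_idxAt (w : List Bool) {p : ℕ} (hp : p < w.length) : 1 ≤ idxAt w p := by
  have := idxAt_mono w (Nat.zero_le p) hp
  rwa [idxAt_zero w (by intro h; simp [h] at hp)] at this

lemma union_eq_Icc (w : List Bool) (hw : w ≠ []) :
    Iset w ∪ Jset w = Finset.Icc 1 (nIdx w) := by
  ext m
  simp only [Finset.mem_union, Finset.mem_Icc, mem_Iset, mem_Jset]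
  constructor
  · rintro (⟨p, hp, _, hpi⟩ | ⟨p, hp, _, hpi⟩) <;>
      exact ⟨hpi ▸ one_le_idxAt w hp, hpi ▸ idxAt_le_nIdx w hp⟩
  · rintro ⟨h1, h2⟩
    have hL : 0 < w.length := List.length_pos_iff.mpr hw
    obtain ⟨p, hp, hpi⟩ := idxAt_surj w (w.length - 1) (by omega) m h1 h2
    rcases Bool.eq_false_or_eq_true (letterAt w p) with h | h <;>
      first
        | exact Or.inl ⟨p, by omega, h, hpi⟩
        | exact Or.inr ⟨p, by omega, h, hpi⟩

lemma Vset_nonempty (w : List Bool) (hL : 2 ≤ w.length)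
    (h0 : letterAt w 0 = true) (hlast : letterAt w (w.length - 1) = false) :
    (Vset w).Nonempty := by
  obtain ⟨r, hr, h1, h2⟩ := exists_switch_le w h0 (w.length - 1) hlast
  exact ⟨idxAt w r, (mem_Vset w _).mpr ⟨r, by omega, h1, h2, rfl⟩⟩

lemma exists_valley_le_J (w : List Bool) (h0 : letterAt w 0 = true)
    {j : ℕ} (hj : j ∈ Jset w) : ∃ v ∈ Vset w, v ≤ j := by
  obtain ⟨q, hq, hql, hqi⟩ := (mem_Jset w j).mp hj
  obtain ⟨r, hr, h1, h2⟩ := exists_switch_le w h0 q hql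
  refine ⟨idxAt w r, (mem_Vset w _).mpr ⟨r, by omega, h1, h2, rfl⟩, ?_⟩
  exact hqi ▸ idxAt_mono w (by omega) hq

lemma exists_valley_gt_I (w : List Bool) (hlast : letterAt w (w.length - 1) = false)
    {i : ℕ} (hi : i ∈ Iset w) (hiV : i ∉ Vset w) : ∃ v ∈ Vset w, i < v := by
  obtain ⟨p, hp, hpl, hpi⟩ := (mem_Iset w i).mp hi
  obtain ⟨r, h1, h2, h3, h4⟩ := exists_switch_ge w hlast (w.length - 1 - p) p rfl hp hpl
  have hv : idxAt w r ∈ Vset w := (mem_Vset w _).mpr ⟨r, h2, h3, h4, rfl⟩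
  have hle : i ≤ idxAt w r := hpi ▸ idxAt_mono w h1 (by omega)
  refine ⟨idxAt w r, hv, ?_⟩
  rcases Nat.eq_or_lt_of_le hle with h | h
  · exact absurd (h ▸ hv) hiV
  · exact h

lemma Vset_subset_I (w : List Bool) : Vset w ⊆ Iset w := Finset.inter_subset_left
lemma Vset_subset_J (w : List Bool) : Vset w ⊆ Jset w := Finset.inter_subset_right

lemma card_lemma (w : List Bool) (hL : 2 ≤ w.length)
    (h0 : letterAt w 0 = true) (hlast : letterAt w (w.length - 1) = false) :
    ((Finset.range (nIdx w + 1) ×ˢ Finset.range (nIdx w + 1)).filter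
      (fun a => a.1 < a.2 ∧ isNuEdgeB w a.1 a.2 = true)).card
      = (Iset w ∪ Jset w).card - 1 := by
  set EF := ((Finset.range (nIdx w + 1) ×ˢ Finset.range (nIdx w + 1)).filter
      (fun a => a.1 < a.2 ∧ isNuEdgeB w a.1 a.2 = true)) with hEF
  have memEF : ∀ a : ℕ × ℕ, a ∈ EF ↔
      a.1 ∈ Iset w ∧ a.2 ∈ Jset w ∧ a.1 < a.2 ∧ ∀ v ∈ Vset w, ¬(a.1 < v ∧ v < a.2) := by
    intro a
    rw [hEF, Finset.mem_filter, Finset.mem_product, Finset.mem_range, Finset.mem_range]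
    constructor
    · rintro ⟨⟨h1, h2⟩, hlt, hB⟩
      obtain ⟨hI, hJ, hnov⟩ := (isNuEdgeB_iff w a.1 a.2 hlt).mp hB
      exact ⟨hI, hJ, hlt, hnov⟩
    · rintro ⟨hI, hJ, hlt, hnov⟩
      obtain ⟨p, hp, _, hpi⟩ := (mem_Iset w a.1).mp hI
      obtain ⟨q, hq, _, hqi⟩ := (mem_Jset w a.2).mp hJ
      refine ⟨⟨?_, ?_⟩, hlt, (isNuEdgeB_iff w a.1 a.2 hlt).mpr ⟨hI, hJ, hnov⟩⟩
      · have := idxAt_le_nIdx w hp; omega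
      · have := idxAt_le_nIdx w hq; omega
  have hVne : (Vset w).Nonempty := Vset_nonempty w hL h0 hlast
  set v₁ := (Vset w).min' hVne with hv₁
  have hv₁V : v₁ ∈ Vset w := Finset.min'_mem _ _
  have key : EF.card = ((Iset w ∪ Jset w).erase v₁).card := by
    apply Finset.card_bij (fun a _ => if a.1 ∈ Vset w then a.2 else a.1)
    · intro a ha
      obtain ⟨hI, hJ, hlt, hnov⟩ := (memEF a).mp ha
      by_cases hV : a.1 ∈ Vset w
      · rw [if_pos hV, Finset.mem_erase]
        have : v₁ ≤ a.1 := Finset.min'_le _ _ hV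
        exact ⟨by omega, Finset.mem_union_right _ hJ⟩
      · rw [if_neg hV, Finset.mem_erase]
        refine ⟨fun h => hV (h ▸ hv₁V), Finset.mem_union_left _ hI⟩
    · intro a ha b hb h
      obtain ⟨haI, haJ, halt, hanov⟩ := (memEF a).mp ha
      obtain ⟨hbI, hbJ, hblt, hbnov⟩ := (memEF b).mp hb
      have hVIJ : ∀ x, x ∈ Iset w → x ∈ Jset w → x ∈ Vset w := fun x h1 h2 => by
        rw [Vset, Finset.mem_inter]; exact ⟨h1, h2⟩
      by_cases haV : a.1 ∈ Vset w
      · by_cases hbV : b.1 ∈ Vset w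
        · rw [if_pos haV, if_pos hbV] at h
          have h12 : a.1 = b.1 := by
            rcases lt_trichotomy a.1 b.1 with hlt | heq | hgt
            · exact absurd ⟨hlt, by omega⟩ (hanov b.1 hbV)
            · exact heq
            · exact absurd ⟨hgt, by omega⟩ (hbnov a.1 haV)
          exact Prod.ext h12 h
        · rw [if_pos haV, if_neg hbV] at h
          exact absurd (hVIJ b.1 hbI (h ▸ haJ)) hbV
      · by_cases hbV : b.1 ∈ Vset w
        · rw [if_neg haV, if_pos hbV] at h
          exact absurd (hVIJ a.1 haI (h ▸ hbJ)) haV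
        · rw [if_neg haV, if_neg hbV] at h
          have ha2V : a.2 ∈ Vset w := snd_valley w halt haI haJ hanov haV
          have hb2V : b.2 ∈ Vset w := snd_valley w hblt hbI hbJ hbnov hbV
          have h22 : a.2 = b.2 := by
            rcases lt_trichotomy a.2 b.2 with hlt | heq | hgt
            · exact absurd ⟨by omega, hlt⟩ (hbnov a.2 ha2V)
            · exact heq
            · exact absurd ⟨by omega, hgt⟩ (hanov b.2 hb2V)
          exact Prod.ext h h22
    · intro b hb
      rw [Finset.mem_erase] at hb
      obtain ⟨hbne, hbU⟩ := hb
      by_cases hbJ : b ∈ Jset w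
      · obtain ⟨v0, hv0, hv0le⟩ := exists_valley_le_J w h0 hbJ
        have hv₁le : v₁ < b := by
          have := Finset.min'_le _ _ hv0
          omega
        have hSne : ((Vset w).filter (· < b)).Nonempty :=
          ⟨v₁, by rw [Finset.mem_filter]; exact ⟨hv₁V, hv₁le⟩⟩
        have hiS : ((Vset w).filter (· < b)).max' hSne ∈ (Vset w).filter (· < b) :=
          Finset.max'_mem _ _
        rw [Finset.mem_filter] at hiS
        refine ⟨(((Vset w).filter (· < b)).max' hSne, b),
          (memEF _).mpr ⟨Vset_subset_I w hiS.1, hbJ, hiS.2, ?_⟩, ?_⟩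
        · rintro u hu ⟨h1, h2⟩
          have hu' : u ∈ (Vset w).filter (· < b) := by
            rw [Finset.mem_filter]; exact ⟨hu, h2⟩
          have := Finset.le_max' _ u hu'
          omega
        · simp [hiS.1]
      · have hbI : b ∈ Iset w := by
          rcases Finset.mem_union.mp hbU with h | h
          · exact h
          · exact absurd h hbJ
        have hbV : b ∉ Vset w := fun h => hbJ (Vset_subset_J w h)
        obtain ⟨v0, hv0, hv0gt⟩ := exists_valley_gt_I w hlast hbI hbV
        have hSne : ((Vset w).filter (b < ·)).Nonempty :=
          ⟨v0, by rw [Finset.mem_filter]; exact ⟨hv0, hv0gt⟩⟩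
        have hjS : ((Vset w).filter (b < ·)).min' hSne ∈ (Vset w).filter (b < ·) :=
          Finset.min'_mem _ _
        rw [Finset.mem_filter] at hjS
        refine ⟨(b, ((Vset w).filter (b < ·)).min' hSne),
          (memEF _).mpr ⟨hbI, Vset_subset_J w hjS.1, hjS.2, ?_⟩, ?_⟩
        · rintro u hu ⟨h1, h2⟩
          have hu' : u ∈ (Vset w).filter (b < ·) := by
            rw [Finset.mem_filter]; exact ⟨hu, h1⟩
          have := Finset.min'_le _ u hu'
          omega
        · simp [hbV]
  rw [key, Finset.card_erase_of_mem
    (Finset.mem_union_left _ (Vset_subset_I w hv₁V))]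

lemma ovl_length (ν : List Bool) : (ovl ν).length = ν.length + 2 := by simp [ovl]

lemma ovl_last (ν : List Bool) : letterAt (ovl ν) ((ovl ν).length - 1) = false := by
  have h : (ovl ν).length - 1 = ν.length + 1 := by simp [ovl]
  rw [h]
  show (true :: (ν ++ [false])).getD (ν.length + 1) false = false
  rw [List.getD_cons_succ]
  rw [List.getD_append_right ν [false] false ν.length (le_refl _)]
  simp

lemma final_length (w : List Bool) (hL : 2 ≤ w.length)
    (h0 : letterAt w 0 = true) (hlast : letterAt w (w.length - 1) = false) :
    (nuEdgePairs w).length = (Iset w ∪ Jset w).card - 1 := by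
  have hbig : ((List.range (nIdx w + 1)).flatMap fun i =>
      (List.range (nIdx w + 1)).map fun j => (i, j))
      = List.range (nIdx w + 1) ×ˢ List.range (nIdx w + 1) := rfl
  have hnd : (nuEdgePairs w).Nodup := by
    rw [nuEdgePairs, hbig]
    exact (List.Nodup.product List.nodup_range List.nodup_range).filter _
  have h1 : (nuEdgePairs w).length = (nuEdgePairs w).toFinset.card :=
    (List.toFinset_card_of_nodup hnd).symm
  have h2 : (nuEdgePairs w).toFinset =
      ((Finset.range (nIdx w + 1) ×ˢ Finset.range (nIdx w + 1)).filter
        (fun a => a.1 < a.2 ∧ isNuEdgeB w a.1 a.2 = true)) := by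
    ext a
    rw [List.mem_toFinset, nuEdgePairs, hbig, List.mem_filter, Finset.mem_filter,
      Finset.mem_product, List.mem_product]
    simp only [Bool.and_eq_true, decide_eq_true_eq, Finset.mem_range, List.mem_range]
  rw [h1, h2, card_lemma w hL h0 hlast]


end Aux14

end FP

open FP in
/-- The ν-graph `G(ν)` has exactly `|I ∪ J| − 1` edges. -/
theorem stmt14 (ν : List Bool) :
    (nuEdgePairs (ovl ν)).length = (Iset (ovl ν) ∪ Jset (ovl ν)).card - 1 :=
  FP.Aux14.final_length (ovl ν) (by simp [FP.ovl]) rfl (FP.Aux14.ovl_last ν)
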